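/- The invariant scheme expression S = [exp(−Δτ(x_τ^d (ln u)_x^d + ((ln u)_x^d)²))·u_i^{n+1} − u_i^n]/Δτ − (4/(h⁺+h⁻)²)·[u_{i+1}^n (u_{i+1}^n/u_{i-1}^n)^{−h⁺/(h⁺+h⁻)} + u_{i-1}^n (u_{i+1}^n/u_{i-1}^n)^{h⁻/(h⁺+h⁻)} − 2u_i^n] transforms under the 5-parameter group action on the stencil as S̃ = e^{ε₃ − ε₅x_i^n − ε₅²τ^n − 2ε₄}·S; in particular S = 0 implies S̃ = 0. -/

import Mathlib

open Real

/-- The invariant scheme expression `S` on the stencil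
`(Δτ; x_{i−1}^n, x_i^n, x_{i+1}^n, x_i^{n+1}; u_{i−1}^n, u_i^n, u_{i+1}^n, u_i^{n+1})`,
with `h⁺ = x_{i+1}^n − x_i^n`, `h⁻ = x_i^n − x_{i−1}^n`,
`x_τ^d = (x_i^{n+1} − x_i^n)/Δτ` and
`(ln u)_x^d = (ln u_{i+1}^n − ln u_{i−1}^n)/(h⁺+h⁻)`. -/
noncomputable def Sexpr (Δτ xm x0 xp x1 um u0 up u1 : ℝ) : ℝ :=
  let hp := xp - x0
  let hm := x0 - xm
  let xτ := (x1 - x0) / Δτ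
  let L := (Real.log up - Real.log um) / (hp + hm)
  (exp (-Δτ * (xτ * L + L^2)) * u1 - u0) / Δτ
    - 4 * (up * (up/um) ^ (-(hp/(hp+hm)))
        + um * (up/um) ^ (hm/(hp+hm)) - 2*u0) / (hp + hm)^2

lemma key1 (e Δ H X A ε₅ : ℝ) (he : e ≠ 0) (hΔ : Δ ≠ 0) (hH : H ≠ 0) :
    -(e*e*Δ) * ( e*(X + 2*ε₅*Δ)/(e*e*Δ) * ((A - ε₅*H)/(e*H)) + ((A - ε₅*H)/(e*H))^2 )
    = (ε₅*X + ε₅^2*Δ) + (-Δ * (X/Δ * (A/H) + (A/H)^2)) := by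
  field_simp; ring

lemma key2 (ε₅ a H : ℝ) (hH : H ≠ 0) : (-ε₅*H)*(-(a/H)) = ε₅*a := by
  field_simp

lemma key3 (ε₅ b H : ℝ) (hH : H ≠ 0) : (-ε₅*H)*(b/H) = -(ε₅*b) := by
  field_simp

/-- The invariant scheme `S` for the heat equation transforms under the
5-parameter group action on the stencil as
`S̃ = e^{ε₃ − ε₅x_i^n − ε₅²τ^n − 2ε₄} S`; in particular `S = 0` implies `S̃ = 0`. -/
theorem invariant_scheme_transforms (ε₁ ε₂ ε₃ ε₄ ε₅ : ℝ)
    (τn τn1 xm x0 xp x1 um u0 up u1 : ℝ)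
    (hτ : τn < τn1) (hxm : xm < x0) (hxp : x0 < xp)
    (hum : 0 < um) (hu0 : 0 < u0) (hup : 0 < up) (hu1 : 0 < u1) :
    Sexpr (exp (2*ε₄)*(τn1 + ε₁) - exp (2*ε₄)*(τn + ε₁))
        (exp ε₄ * (xm + ε₂ + 2*ε₅*τn))
        (exp ε₄ * (x0 + ε₂ + 2*ε₅*τn))
        (exp ε₄ * (xp + ε₂ + 2*ε₅*τn))
        (exp ε₄ * (x1 + ε₂ + 2*ε₅*τn1))
        (exp (ε₃ - ε₅*xm - ε₅^2*τn) * um)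
        (exp (ε₃ - ε₅*x0 - ε₅^2*τn) * u0)
        (exp (ε₃ - ε₅*xp - ε₅^2*τn) * up)
        (exp (ε₃ - ε₅*x1 - ε₅^2*τn1) * u1)
      = exp (ε₃ - ε₅*x0 - ε₅^2*τn - 2*ε₄)
        * Sexpr (τn1 - τn) xm x0 xp x1 um u0 up u1 := by
  have hΔ : (0:ℝ) < τn1 - τn := sub_pos.mpr hτ
  have hH : (0:ℝ) < xp - x0 + (x0 - xm) := by linarith
  have hexpE : ∀ x y : ℝ, rexp x ^ y = rexp (x*y) := fun x y => by
    rw [Real.rpow_def_of_pos (exp_pos x), Real.log_exp]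
  have hpm : (-xm + xp) ≠ 0 := by linarith
  have h2e : rexp (2*ε₄) = rexp ε₄ * rexp ε₄ := by rw [← Real.exp_add]; ring_nf
  simp only [Sexpr]
  rw [show rexp (2*ε₄)*(τn1+ε₁) - rexp (2*ε₄)*(τn+ε₁) = rexp (2*ε₄)*(τn1-τn) from by ring]
  rw [show rexp ε₄ * (x1 + ε₂ + 2*ε₅*τn1) - rexp ε₄ * (x0 + ε₂ + 2*ε₅*τn)
      = rexp ε₄ * ((x1-x0) + 2*ε₅*(τn1-τn)) from by ring]
  rw [show rexp ε₄ * (xp + ε₂ + 2*ε₅*τn) - rexp ε₄ * (x0 + ε₂ + 2*ε₅*τn)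
      = rexp ε₄ * (xp-x0) from by ring]
  rw [show rexp ε₄ * (x0 + ε₂ + 2*ε₅*τn) - rexp ε₄ * (xm + ε₂ + 2*ε₅*τn)
      = rexp ε₄ * (x0-xm) from by ring]
  rw [show rexp ε₄ * (xp-x0) + rexp ε₄ * (x0-xm) = rexp ε₄ * (xp-x0+(x0-xm)) from by ring]
  rw [Real.log_mul (exp_ne_zero _) hup.ne', Real.log_mul (exp_ne_zero _) hum.ne',
    Real.log_exp, Real.log_exp]
  rw [show rexp (ε₃ - ε₅*xp - ε₅^2*τn) * up / (rexp (ε₃ - ε₅*xm - ε₅^2*τn) * um)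
      = rexp (ε₅*(xm-xp)) * (up/um) from by
    rw [mul_div_mul_comm, ← Real.exp_sub]; ring_nf]
  rw [mul_div_mul_left (xp-x0) _ (exp_ne_zero ε₄), mul_div_mul_left (x0-xm) _ (exp_ne_zero ε₄)]
  rw [Real.mul_rpow (exp_pos _).le (div_nonneg hup.le hum.le),
    Real.mul_rpow (exp_pos _).le (div_nonneg hup.le hum.le)]
  rw [hexpE, hexpE]
  rw [show ε₅*(xm-xp) = -ε₅*(xp-x0+(x0-xm)) from by ring]
  rw [key2 ε₅ (xp-x0) _ hH.ne', key3 ε₅ (x0-xm) _ hH.ne']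
  rw [show (ε₃ - ε₅ * xp - ε₅ ^ 2 * τn + Real.log up - (ε₃ - ε₅ * xm - ε₅ ^ 2 * τn + Real.log um))
      = (Real.log up - Real.log um) - ε₅ * (xp - x0 + (x0 - xm)) from by ring]
  rw [h2e]
  rw [key1 (rexp ε₄) (τn1-τn) (xp - x0 + (x0 - xm)) (x1-x0) (Real.log up - Real.log um) ε₅
    (exp_ne_zero _) hΔ.ne' hH.ne']
  rw [Real.exp_add]
  rw [show rexp (ε₅*(x1-x0) + ε₅^2*(τn1-τn))
      = rexp (ε₃ - ε₅*x0 - ε₅^2*τn) / rexp (ε₃ - ε₅*x1 - ε₅^2*τn1) from by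
    rw [eq_div_iff (exp_ne_zero _), ← Real.exp_add]; congr 1; ring]
  rw [show rexp (ε₅*(xp-x0))
      = rexp (ε₃ - ε₅*x0 - ε₅^2*τn) / rexp (ε₃ - ε₅*xp - ε₅^2*τn) from by
    rw [eq_div_iff (exp_ne_zero _), ← Real.exp_add]; congr 1; ring]
  rw [show rexp (-(ε₅*(x0-xm)))
      = rexp (ε₃ - ε₅*x0 - ε₅^2*τn) / rexp (ε₃ - ε₅*xm - ε₅^2*τn) from by
    rw [eq_div_iff (exp_ne_zero _), ← Real.exp_add]; congr 1; ring]
  rw [show rexp (ε₃ - ε₅*x0 - ε₅^2*τn - 2*ε₄)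
      = rexp (ε₃ - ε₅*x0 - ε₅^2*τn) / (rexp ε₄ * rexp ε₄) from by
    rw [eq_div_iff (by positivity), ← Real.exp_add, ← Real.exp_add]; congr 1; ring]
  set Δ := τn1 - τn with hΔdef
  set H := xp - x0 + (x0 - xm) with hHdef
  set e := rexp ε₄ with hedef
  set E := rexp (ε₃ - ε₅*x0 - ε₅^2*τn) with hEdef
  set X1 := rexp (ε₃ - ε₅*x1 - ε₅^2*τn1) with hX1def
  set Xp := rexp (ε₃ - ε₅*xp - ε₅^2*τn) with hXpdef
  set Xm := rexp (ε₃ - ε₅*xm - ε₅^2*τn) with hXmdef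
  have he : e ≠ 0 := by rw [hedef]; exact exp_ne_zero _
  have hE : E ≠ 0 := by rw [hEdef]; exact exp_ne_zero _
  have hX1 : X1 ≠ 0 := by rw [hX1def]; exact exp_ne_zero _
  have hXp : Xp ≠ 0 := by rw [hXpdef]; exact exp_ne_zero _
  have hXm : Xm ≠ 0 := by rw [hXmdef]; exact exp_ne_zero _
  field_simp
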